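/- Let V_r := (𝔽₂²)^r be equipped with the symplectic form ⟨u,v⟩ := Σ_{j=1}^r (x_j z'_j + z_j x'_j) where u_j = (x_j,z_j), v_j = (x'_j,z'_j). Define the kernel κ : 𝔽₂² × 𝔽₂² → ℝ by κ(0,0) = 1; κ(a,0) = κ(0,b) = 1 for nonzero a,b; κ(a,a) = 3 for nonzero a; κ(a,b) = 0 for distinct nonzero a,b; and set κ_r(u,v) := ∏_{j=1}^r κ(u_j,v_j) and F_r(A) := 4^{−r} Σ_{u,v ∈ A} κ_r(u,v) for A ⊆ V_r. If A ⊆ V_r is an affine subspace of dimension m such that ⟨u,v⟩ = 0 for all u,v ∈ A (an affine isotropic set), then F_r(A) ≤ (3/4)^{r−m} (3/2)^m. Moreover, when r = m = n and A = {0,p₁} × ⋯ × {0,pₙ} with each p_j a nonzero element of 𝔽₂², equality holds: F_n(A) = (3/2)^n. -/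

import Mathlib

open BigOperators

noncomputable section

/-- `V_r = (𝔽₂²)^r`. -/
abbrev V (r : ℕ) := Fin r → (ZMod 2 × ZMod 2)

/-- The symplectic form `⟨u,v⟩ = Σ_j (x_j z'_j + z_j x'_j)` on `V_r`. -/
def symp {r : ℕ} (u v : V r) : ZMod 2 :=
  ∑ j, ((u j).1 * (v j).2 + (u j).2 * (v j).1)

/-- The one-site kernel `κ`: `κ(0,0) = 1`; `κ(a,0) = κ(0,b) = 1`; `κ(a,a) = 3` for
nonzero `a`; `κ(a,b) = 0` for distinct nonzero `a, b`. -/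
def kap (a b : ZMod 2 × ZMod 2) : ℝ :=
  if a = 0 ∨ b = 0 then 1 else if a = b then 3 else 0

/-- The product kernel `κ_r(u,v) = ∏_j κ(u_j, v_j)`. -/
def kapr {r : ℕ} (u v : V r) : ℝ := ∏ j, kap (u j) (v j)

/-- `F_r(A) = 4^{−r} Σ_{u,v ∈ A} κ_r(u,v)`. -/
def Fr (r : ℕ) (A : Set (V r)) : ℝ :=
  (1 / 4 ^ r) * ∑ u ∈ (Set.toFinite A).toFinset, ∑ v ∈ (Set.toFinite A).toFinset, kapr u v


abbrev F2 := ZMod 2 × ZMod 2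
def om (a b : F2) : ZMod 2 := a.1 * b.2 + a.2 * b.1

lemma kap_nonneg (a b : F2) : 0 ≤ kap a b := by
  unfold kap; split_ifs <;> norm_num

lemma kap_symm (a b : F2) : kap a b = kap b a := by
  by_cases h1 : a = 0 <;> by_cases h2 : b = 0 <;> by_cases h3 : a = b <;>
    simp [kap, h1, h2, h3, eq_comm]

lemma kapr_nonneg {r : ℕ} (x y : V r) : 0 ≤ kapr x y :=
  Finset.prod_nonneg fun j _ => kap_nonneg _ _

lemma kapr_symm {r : ℕ} (x y : V r) : kapr x y = kapr y x :=
  Finset.prod_congr rfl fun j _ => kap_symm _ _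

lemma kapr_cons {r : ℕ} (a b : F2) (z w : V r) :
    kapr (Fin.cons a z) (Fin.cons b w) = kap a b * kapr z w := by
  unfold kapr; rw [Fin.prod_univ_succ]; simp

lemma symp_cons {r : ℕ} (a b : F2) (z w : V r) :
    symp (Fin.cons a z) (Fin.cons b w) = om a b + symp z w := by
  unfold symp om; rw [Fin.sum_univ_succ]; simp

lemma symp_self {r : ℕ} (x : V r) : symp x x = 0 := by
  unfold symp
  apply Finset.sum_eq_zero
  intro j _
  have : ∀ a b : ZMod 2, a * b + b * a = 0 := by decide
  exact this _ _

lemma cons_add (a b : F2) {r : ℕ} (z w : V r) :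
    (Fin.cons a z + Fin.cons b w : V (r+1)) = Fin.cons (a+b) (z+w) := by
  funext j
  refine Fin.cases ?_ (fun i => ?_) j <;> simp

lemma sum_F2 {M : Type*} [AddCommMonoid M] (f : F2 → M) :
    ∑ a : F2, f a = f 0 + f (1,0) + f (0,1) + f (1,1) := by
  rw [show (Finset.univ : Finset F2) = {0, (1,0), (0,1), (1,1)} from by decide]
  rw [Finset.sum_insert (by decide), Finset.sum_insert (by decide),
    Finset.sum_insert (by decide), Finset.sum_singleton]
  abel

lemma sum_split {M : Type*} [AddCommMonoid M] {r : ℕ} (A : Finset (V (r+1))) (f : V (r+1) → M) :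
    ∑ x ∈ A, f x
      = ∑ a : F2, ∑ z ∈ Finset.univ.filter (fun z : V r => Fin.cons a z ∈ A), f (Fin.cons a z) := by
  classical
  calc ∑ x ∈ A, f x = ∑ x : V (r+1), if x ∈ A then f x else 0 := by
        rw [Finset.sum_ite_mem, Finset.univ_inter]
    _ = ∑ p : F2 × V r, (if Fin.cons p.1 p.2 ∈ A then f (Fin.cons p.1 p.2) else 0) :=
        (Fintype.sum_equiv (Fin.consEquiv (fun _ => F2)) _ _ (fun p => rfl)).symm
    _ = ∑ a : F2, ∑ z : V r, (if Fin.cons a z ∈ A then f (Fin.cons a z) else 0) :=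
        Fintype.sum_prod_type _
    _ = _ := by
        refine Finset.sum_congr rfl fun a _ => ?_
        rw [Finset.sum_filter]

theorem core : ∀ (r : ℕ) (A : Finset (V r)), A.Nonempty →
    (∀ x ∈ A, ∀ y ∈ A, ∀ z ∈ A, x + y + z ∈ A) →
    (∀ x ∈ A, ∀ y ∈ A, symp x y = 0) →
    (A.card : ℝ) ≤ 2 ^ r ∧ ∑ x ∈ A, ∑ y ∈ A, kapr x y ≤ 3 ^ r * A.card := by
  intro r
  induction r with
  | zero =>
    intro A hne hclos hsymp
    have hcard : A.card = 1 := by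
      refine le_antisymm ?_ (Finset.card_pos.mpr hne)
      exact Finset.card_le_one.mpr (fun a _ b _ => Subsingleton.elim a b)
    have hk : ∀ x ∈ A, ∀ y ∈ A, kapr x y = 1 := by
      intro x _ y _
      unfold kapr
      exact Finset.prod_of_isEmpty _
    constructor
    · rw [hcard]; norm_num
    · calc ∑ x ∈ A, ∑ y ∈ A, kapr x y = ∑ x ∈ A, ∑ y ∈ A, (1:ℝ) := by
            refine Finset.sum_congr rfl fun x hx => Finset.sum_congr rfl fun y hy => hk x hx y hy
      _ = A.card * A.card := by simp
      _ ≤ 3 ^ 0 * A.card := by rw [hcard]; norm_num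
  | succ r IH =>
    intro A hne hclos hsymp
    set B : F2 → Finset (V r) := fun a => Finset.univ.filter (fun z : V r => Fin.cons a z ∈ A) with hBdef
    have hmem : ∀ a z, z ∈ B a ↔ Fin.cons a z ∈ A := by
      intro a z; simp [hBdef]
    set X : F2 → F2 → ℝ := fun a b => ∑ z ∈ B a, ∑ w ∈ B b, kapr z w with hXdef
    -- basic facts
    have hXnn : ∀ a b, 0 ≤ X a b := by
      intro a b
      exact Finset.sum_nonneg fun z _ => Finset.sum_nonneg fun w _ => kapr_nonneg _ _
    have hXsymm : ∀ a b, X a b = X b a := by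
      intro a b
      show (∑ z ∈ B a, ∑ w ∈ B b, kapr z w) = ∑ z ∈ B b, ∑ w ∈ B a, kapr z w
      rw [Finset.sum_comm]
      exact Finset.sum_congr rfl fun z _ => Finset.sum_congr rfl fun w _ => kapr_symm _ _
    have hclosB : ∀ a b c : F2, ∀ z ∈ B a, ∀ w ∈ B b, ∀ v ∈ B c, z + w + v ∈ B (a+b+c) := by
      intro a b c z hz w hw v hv
      rw [hmem] at hz hw hv ⊢
      have := hclos _ hz _ hw _ hv
      rwa [cons_add, cons_add] at this
    have hsympB : ∀ a b : F2, ∀ z ∈ B a, ∀ w ∈ B b, symp z w = om a b := by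
      intro a b z hz w hw
      rw [hmem] at hz hw
      have h0 := hsymp _ hz _ hw
      rw [symp_cons] at h0
      have : ∀ o s : ZMod 2, o + s = 0 → s = o := by decide
      exact this _ _ h0
    -- decomposition of the double sum
    have hN : ∑ x ∈ A, ∑ y ∈ A, kapr x y = ∑ a : F2, ∑ b : F2, kap a b * X a b := by
      rw [sum_split A (fun x => ∑ y ∈ A, kapr x y)]
      refine Finset.sum_congr rfl fun a _ => ?_
      rw [show (∑ z ∈ B a, ∑ y ∈ A, kapr (Fin.cons a z) y)
            = ∑ z ∈ B a, ∑ b : F2, ∑ w ∈ B b, kap a b * kapr z w from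
        Finset.sum_congr rfl fun z _ => by
          rw [sum_split A (fun y => kapr (Fin.cons a z) y)]
          refine Finset.sum_congr rfl fun b _ => Finset.sum_congr rfl fun w _ => kapr_cons a b z w]
      rw [Finset.sum_comm]
      refine Finset.sum_congr rfl fun b _ => ?_
      show (∑ z ∈ B a, ∑ w ∈ B b, kap a b * kapr z w) = kap a b * ∑ z ∈ B a, ∑ w ∈ B b, kapr z w
      simp_rw [Finset.mul_sum]
    -- card decomposition
    have hcard : (A.card : ℝ)
        = (B 0).card + (B (1,0)).card + (B (0,1)).card + (B (1,1)).card := by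
      have : A.card = ∑ a : F2, (B a).card := by
        rw [Finset.card_eq_sum_ones, sum_split A (fun _ => 1)]
        exact Finset.sum_congr rfl fun a _ => by rw [Finset.card_eq_sum_ones]
      rw [this, sum_F2]
      push_cast
      ring

    -- more basic facts
    have F2_add_self : ∀ a : F2, a + a = 0 := by decide
    have Vr_add_self : ∀ x : V r, x + x = 0 := fun x => funext fun j => F2_add_self (x j)
    have haaa : ∀ a : F2, a + a + a = a := by decide
    have hom_self : ∀ a : F2, om a a = 0 := by decide
    have hom0l : ∀ b : F2, om 0 b = 0 := by decide
    have hom0r : ∀ a : F2, om a 0 = 0 := by decide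
    have homnz : ∀ e f : F2, e ≠ 0 → f ≠ 0 → e ≠ f → om e f = 1 := by decide
    have hXempty : ∀ a b : F2, B a = ∅ → X a b = 0 := by
      intro a b h
      show (∑ z ∈ B a, ∑ w ∈ B b, kapr z w) = 0
      rw [h, Finset.sum_empty]
    -- single block bound
    have hsingle : ∀ a : F2, ((B a).card : ℝ) ≤ 2 ^ r ∧ X a a ≤ 3 ^ r * (B a).card := by
      intro a
      rcases (B a).eq_empty_or_nonempty with h | h
      · constructor
        · rw [h]
          simp
        · rw [hXempty a a h]
          exact mul_nonneg (pow_nonneg (by norm_num) r) (Nat.cast_nonneg _)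
      · have := IH (B a) h
          (fun z hz w hw v hv => by
            have h' := hclosB a a a z hz w hw v hv
            rwa [haaa] at h')
          (fun z hz w hw => by rw [hsympB a a z hz w hw, hom_self])
        exact this
    -- pair (0,e) bound
    have hpair : ∀ e : F2, Disjoint (B 0) (B e) →
        ((B 0).card : ℝ) + (B e).card ≤ 2 ^ r ∧
          X 0 0 + X e e + 2 * X 0 e ≤ 3 ^ r * (((B 0).card : ℝ) + (B e).card) := by
      intro e hd
      rcases (B 0 ∪ B e).eq_empty_or_nonempty with h | h
      · obtain ⟨h0, he⟩ := Finset.union_eq_empty.mp h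
        constructor
        · rw [h0, he]
          simp
        · rw [hXempty 0 0 h0, hXempty e e he, hXempty 0 e h0]
          simp [h0]
      · have hlabel : ∀ x ∈ B 0 ∪ B e, ∃ a : F2, (a = 0 ∨ a = e) ∧ x ∈ B a := by
          intro x hx
          rcases Finset.mem_union.mp hx with h' | h'
          exacts [⟨0, Or.inl rfl, h'⟩, ⟨e, Or.inr rfl, h'⟩]
        have hclosU : ∀ x ∈ B 0 ∪ B e, ∀ y ∈ B 0 ∪ B e, ∀ z ∈ B 0 ∪ B e,
            x + y + z ∈ B 0 ∪ B e := by
          intro x hx y hy z hz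
          obtain ⟨a, ha, hxa⟩ := hlabel x hx
          obtain ⟨b, hb, hyb⟩ := hlabel y hy
          obtain ⟨c, hc, hzc⟩ := hlabel z hz
          have h' := hclosB a b c x hxa y hyb z hzc
          rcases ha with rfl | rfl <;> rcases hb with rfl | rfl <;> rcases hc with rfl | rfl <;>
            simp only [add_zero, zero_add, F2_add_self] at h' <;>
            first
              | exact Finset.mem_union_left _ h'
              | exact Finset.mem_union_right _ h'
        have hsympU : ∀ x ∈ B 0 ∪ B e, ∀ y ∈ B 0 ∪ B e, symp x y = 0 := by
          intro x hx y hy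
          obtain ⟨a, ha, hxa⟩ := hlabel x hx
          obtain ⟨b, hb, hyb⟩ := hlabel y hy
          have h' := hsympB a b x hxa y hyb
          rcases ha with rfl | rfl <;> rcases hb with rfl | rfl <;> rw [h'] <;>
            first
              | exact hom0l _
              | exact hom0r _
              | exact hom_self _
        obtain ⟨hcU, hsU⟩ := IH (B 0 ∪ B e) h hclosU hsympU
        have hcU' : ((B 0 ∪ B e).card : ℝ) = (B 0).card + (B e).card := by
          rw [Finset.card_union_of_disjoint hd]
          push_cast
          ring
        have hsplitU : ∑ x ∈ B 0 ∪ B e, ∑ y ∈ B 0 ∪ B e, kapr x y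
            = X 0 0 + X 0 e + (X e 0 + X e e) := by
          rw [Finset.sum_union hd]
          congr 1 <;>
          · simp only [Finset.sum_union hd]
            rw [Finset.sum_add_distrib]
        rw [hcU'] at hcU
        rw [hsplitU, hcU'] at hsU
        have hxe0 := hXsymm e 0
        exact ⟨hcU, by linarith⟩
    -- dichotomy
    have hdich : ∀ a b : F2, (B a ∩ B b).Nonempty → B a = B b := by
      have key : ∀ a b : F2, ∀ x : V r, x ∈ B a → x ∈ B b → B a ⊆ B b := by
        intro a b x hxa hxb z hz
        have h' := hclosB a a b z hz x hxa x hxb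
        have hz' : z + x + x = z := by rw [add_assoc, Vr_add_self, add_zero]
        have hab : a + a + b = b := by rw [F2_add_self, zero_add]
        rwa [hz', hab] at h'
      intro a b ⟨x, hx⟩
      rw [Finset.mem_inter] at hx
      exact Finset.Subset.antisymm (key a b x hx.1 hx.2) (key b a x hx.2 hx.1)
    -- uniqueness of a coincident block
    have huniq : ∀ e f : F2, e ≠ 0 → f ≠ 0 → e ≠ f → (B 0).Nonempty →
        B 0 = B e → B 0 = B f → False := by
      intro e f he hf hef ⟨z, hz0⟩ hBe hBf
      have hze : z ∈ B e := hBe ▸ hz0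
      have hzf : z ∈ B f := hBf ▸ hz0
      have h1 := hsympB e f z hze z hzf
      rw [symp_self, homnz e f he hf hef] at h1
      exact absurd h1.symm (by decide)
    -- equal sizes
    have hsize : ∀ a b : F2, (B a).Nonempty → (B b).Nonempty → (B a).card = (B b).card := by
      have key : ∀ a b : F2, (B a).Nonempty → (B b).Nonempty → (B a).card ≤ (B b).card := by
        intro a b ⟨x, hx⟩ ⟨w, hw⟩
        apply Finset.card_le_card_of_injOn (fun z => z + x + w)
        · intro z hz
          have h' := hclosB a a b z hz x hx w hw
          have hab : a + a + b = b := by rw [F2_add_self, zero_add]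
          rwa [hab] at h'
        · intro z1 _ z2 _ h
          exact add_right_cancel (add_right_cancel h)
      intro a b ha hb
      exact le_antisymm (key a b ha hb) (key b a hb ha)
    -- evaluated kernel decomposition
    have hNeq : ∑ x ∈ A, ∑ y ∈ A, kapr x y
        = X 0 0 + 3*(X (1,0) (1,0) + X (0,1) (0,1) + X (1,1) (1,1))
            + 2*(X 0 (1,0) + X 0 (0,1) + X 0 (1,1)) := by
      rw [hN, sum_F2 (fun a => ∑ b : F2, kap a b * X a b),
        sum_F2 (fun b => kap 0 b * X 0 b), sum_F2 (fun b => kap (1,0) b * X (1,0) b),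
        sum_F2 (fun b => kap (0,1) b * X (0,1) b), sum_F2 (fun b => kap (1,1) b * X (1,1) b)]
      rw [hXsymm (1,0) 0, hXsymm (0,1) 0, hXsymm (1,1) 0]
      norm_num [kap, Prod.ext_iff]
      ring
    rcases (B 0).eq_empty_or_nonempty with hB0 | hB0
    · -- B 0 empty
      have hb0 : ((B 0).card : ℝ) = 0 := by rw [hB0]; simp
      have hX00 : X 0 0 = 0 := hXempty 0 0 hB0
      have hX0i : X 0 (1,0) = 0 := hXempty 0 _ hB0
      have hX0j : X 0 (0,1) = 0 := hXempty 0 _ hB0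
      have hX0k : X 0 (1,1) = 0 := hXempty 0 _ hB0
      have h1 := hsingle (1,0)
      have h2 := hsingle (0,1)
      have h3 := hsingle (1,1)
      have hone : B (1,0) = ∅ ∨ B (0,1) = ∅ ∨ B (1,1) = ∅ := by
        by_contra hcon
        push_neg at hcon
        obtain ⟨hi, hj, hk⟩ := hcon
        obtain ⟨z, hz⟩ := hi
        obtain ⟨w, hw⟩ := hj
        obtain ⟨v, hv⟩ := hk
        have h' := hclosB (1,0) (0,1) (1,1) z hz w hw v hv
        rw [show ((1,0) : F2) + (0,1) + (1,1) = 0 from by decide, hB0] at h'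
        exact absurd h' (Finset.notMem_empty _)
      constructor
      · rw [hcard, pow_succ]
        rcases hone with h | h | h
        · have hz : ((B ((1,0) : F2)).card : ℝ) = 0 := by rw [h]; simp
          linarith [h1.1, h2.1, h3.1]
        · have hz : ((B ((0,1) : F2)).card : ℝ) = 0 := by rw [h]; simp
          linarith [h1.1, h2.1, h3.1]
        · have hz : ((B ((1,1) : F2)).card : ℝ) = 0 := by rw [h]; simp
          linarith [h1.1, h2.1, h3.1]
      · rw [hNeq, hcard, hX00, hX0i, hX0j, hX0k, hb0, pow_succ]
        linarith [h1.2, h2.2, h3.2]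
    · -- B 0 nonempty
      have hd1 : Disjoint (B 0) (B (1,0)) ∨ B 0 = B (1,0) := by
        rcases (B 0 ∩ B (1,0)).eq_empty_or_nonempty with h | h
        exacts [Or.inl (Finset.disjoint_iff_inter_eq_empty.mpr h), Or.inr (hdich _ _ h)]
      have hd2 : Disjoint (B 0) (B (0,1)) ∨ B 0 = B (0,1) := by
        rcases (B 0 ∩ B (0,1)).eq_empty_or_nonempty with h | h
        exacts [Or.inl (Finset.disjoint_iff_inter_eq_empty.mpr h), Or.inr (hdich _ _ h)]
      have hd3 : Disjoint (B 0) (B (1,1)) ∨ B 0 = B (1,1) := by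
        rcases (B 0 ∩ B (1,1)).eq_empty_or_nonempty with h | h
        exacts [Or.inl (Finset.disjoint_iff_inter_eq_empty.mpr h), Or.inr (hdich _ _ h)]
      -- the case of one coincident block, in general form
      have mainEq : ∀ e f g : F2, B 0 = B e →
          Disjoint (B 0) (B f) → Disjoint (B 0) (B g) →
          ((A.card : ℝ) = (B 0).card + (B e).card + (B f).card + (B g).card) →
          (∑ x ∈ A, ∑ y ∈ A, kapr x y
            = X 0 0 + 3*(X e e + X f f + X g g) + 2*(X 0 e + X 0 f + X 0 g)) →
          (A.card : ℝ) ≤ 2 ^ (r+1) ∧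
            ∑ x ∈ A, ∑ y ∈ A, kapr x y ≤ 3 ^ (r+1) * A.card := by
        intro e f g heq hdf hdg hc hne'
        have pf := hpair f hdf
        have pg := hpair g hdg
        have s0 := hsingle 0
        have sf := hsingle f
        have sg := hsingle g
        have hXee : X e e = X 0 0 := by
          show (∑ z ∈ B e, ∑ w ∈ B e, kapr z w) = X 0 0
          rw [← heq]
        have hX0e : X 0 e = X 0 0 := by
          show (∑ z ∈ B 0, ∑ w ∈ B e, kapr z w) = X 0 0
          rw [← heq]
        have hbe : ((B e).card : ℝ) = (B 0).card := by rw [← heq]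
        constructor
        · rw [hc, pow_succ]
          linarith [pf.1, pg.1, hbe]
        · rw [hne', hc, hXee, hX0e, hbe, pow_succ]
          linarith [pf.2, pg.2, s0.2, sf.2, sg.2, hXnn 0 0]
      rcases hd1 with hd1 | hd1
      · rcases hd2 with hd2 | hd2
        · rcases hd3 with hd3 | hd3
          · -- all disjoint
            have p1 := hpair (1,0) hd1
            have p2 := hpair (0,1) hd2
            have p3 := hpair (1,1) hd3
            have s0 := hsingle 0
            have s1 := hsingle (1,0)
            have s2 := hsingle (0,1)
            have s3 := hsingle (1,1)
            have hsum2 : ∀ e f : F2, (B e).Nonempty → (B f).Nonempty →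
                (B (e+f)).Nonempty := by
              intro e f ⟨z, hz⟩ ⟨w, hw⟩
              obtain ⟨v, hv⟩ := hB0
              have h' := hclosB e f 0 z hz w hw v hv
              rw [add_zero] at h'
              exact ⟨_, h'⟩
            constructor
            · -- card bound
              rw [hcard, pow_succ]
              by_cases hi : (B (1,0)).Nonempty <;> by_cases hj : (B (0,1)).Nonempty <;>
                by_cases hk : (B (1,1)).Nonempty
              · -- all nonempty
                have hbi : ((B ((1,0):F2)).card : ℝ) = (B 0).card := by
                  rw [hsize (1,0) 0 hi hB0]
                have hbj : ((B ((0,1):F2)).card : ℝ) = (B 0).card := by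
                  rw [hsize (0,1) 0 hj hB0]
                have hbk : ((B ((1,1):F2)).card : ℝ) = (B 0).card := by
                  rw [hsize (1,1) 0 hk hB0]
                linarith [p1.1]
              · exact absurd (by
                  have := hsum2 (1,0) (0,1) hi hj
                  rwa [show ((1,0):F2) + (0,1) = (1,1) from by decide] at this) hk
              · exact absurd (by
                  have := hsum2 (1,0) (1,1) hi hk
                  rwa [show ((1,0):F2) + (1,1) = (0,1) from by decide] at this) hj
              · have hzj : ((B ((0,1):F2)).card : ℝ) = 0 := by
                  rw [Finset.not_nonempty_iff_eq_empty.mp hj]; simp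
                have hzk : ((B ((1,1):F2)).card : ℝ) = 0 := by
                  rw [Finset.not_nonempty_iff_eq_empty.mp hk]; simp
                linarith [p1.1]
              · exact absurd (by
                  have := hsum2 (0,1) (1,1) hj hk
                  rwa [show ((0,1):F2) + (1,1) = (1,0) from by decide] at this) hi
              · have hzi : ((B ((1,0):F2)).card : ℝ) = 0 := by
                  rw [Finset.not_nonempty_iff_eq_empty.mp hi]; simp
                have hzk : ((B ((1,1):F2)).card : ℝ) = 0 := by
                  rw [Finset.not_nonempty_iff_eq_empty.mp hk]; simp
                linarith [p2.1]
              · have hzi : ((B ((1,0):F2)).card : ℝ) = 0 := by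
                  rw [Finset.not_nonempty_iff_eq_empty.mp hi]; simp
                have hzj : ((B ((0,1):F2)).card : ℝ) = 0 := by
                  rw [Finset.not_nonempty_iff_eq_empty.mp hj]; simp
                linarith [p3.1]
              · have hzi : ((B ((1,0):F2)).card : ℝ) = 0 := by
                  rw [Finset.not_nonempty_iff_eq_empty.mp hi]; simp
                have hzj : ((B ((0,1):F2)).card : ℝ) = 0 := by
                  rw [Finset.not_nonempty_iff_eq_empty.mp hj]; simp
                have hzk : ((B ((1,1):F2)).card : ℝ) = 0 := by
                  rw [Finset.not_nonempty_iff_eq_empty.mp hk]; simp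
                linarith [s0.1]
            · rw [hNeq, hcard, pow_succ]
              linarith [p1.2, p2.2, p3.2, s1.2, s2.2, s3.2, hXnn 0 0]
          · exact mainEq (1,1) (1,0) (0,1) hd3 hd1 hd2
              (by rw [hcard]; try ring) (by rw [hNeq]; try ring)
        · rcases hd3 with hd3 | hd3
          · exact mainEq (0,1) (1,0) (1,1) hd2 hd1 hd3
              (by rw [hcard]; try ring) (by rw [hNeq]; try ring)
          · exact absurd hd3 (fun h => huniq (0,1) (1,1) (by decide) (by decide) (by decide) hB0 hd2 h)
      · rcases hd2 with hd2 | hd2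
        · rcases hd3 with hd3 | hd3
          · exact mainEq (1,0) (0,1) (1,1) hd1 hd2 hd3
              (by rw [hcard]; try ring) (by rw [hNeq]; try ring)
          · exact absurd hd3 (fun h => huniq (1,0) (1,1) (by decide) (by decide) (by decide) hB0 hd1 h)
        · exact absurd hd2 (fun h => huniq (1,0) (0,1) (by decide) (by decide) (by decide) hB0 hd1 h)


/-- If `A ⊆ V_r` is an affine subspace of dimension `m` on which the
symplectic form vanishes identically, then `F_r(A) ≤ (3/4)^{r−m} (3/2)^m`; moreover for
`A = {0,p₁} × ⋯ × {0,pₙ}` with every `p_j ≠ 0`, `F_n(A) = (3/2)^n`. -/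
theorem affine_isotropic_kernel_bound :
    (∀ (r m : ℕ) (K : Submodule (ZMod 2) (V r)) (u : V r) (A : Set (V r)),
      Module.finrank (ZMod 2) K = m →
      A = (fun k => u + k) '' (K : Set (V r)) →
      (∀ x ∈ A, ∀ y ∈ A, symp x y = 0) →
      Fr r A ≤ (3/4 : ℝ)^(r - m) * (3/2 : ℝ)^m) ∧
    (∀ (n : ℕ) (p : Fin n → ZMod 2 × ZMod 2), (∀ j, p j ≠ 0) →
      Fr n {x | ∀ j, x j = 0 ∨ x j = p j} = (3/2 : ℝ)^n) := by
  constructor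
  · intro r m K u A hrank hA hiso
    have Vr_add_self : ∀ x : V r, x + x = 0 := fun x => funext fun j => by
      have : ∀ a : F2, a + a = 0 := by decide
      exact this (x j)
    set Af := (Set.toFinite A).toFinset with hAf
    have hmemA : ∀ x, x ∈ Af ↔ x ∈ A := fun x => Set.Finite.mem_toFinset _
    have hne : Af.Nonempty := by
      refine ⟨u, (hmemA u).mpr ?_⟩
      rw [hA]
      exact ⟨0, K.zero_mem, add_zero u⟩
    have hclos : ∀ x ∈ Af, ∀ y ∈ Af, ∀ z ∈ Af, x + y + z ∈ Af := by
      intro x hx y hy z hz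
      rw [hmemA] at hx hy hz ⊢
      rw [hA] at hx hy hz ⊢
      obtain ⟨a, ha, rfl⟩ := hx
      obtain ⟨b, hb, rfl⟩ := hy
      obtain ⟨c, hc, rfl⟩ := hz
      refine ⟨a + b + c, K.add_mem (K.add_mem ha hb) hc, ?_⟩
      have h2 : u + u = 0 := Vr_add_self u
      show u + (a + b + c) = u + a + (u + b) + (u + c)
      rw [show u + a + (u + b) + (u + c) = (u + u) + (u + (a + b + c)) from by abel, h2,
        zero_add]
    have hsymp' : ∀ x ∈ Af, ∀ y ∈ Af, symp x y = 0 := by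
      intro x hx y hy
      exact hiso x ((hmemA x).mp hx) y ((hmemA y).mp hy)
    obtain ⟨hcardR, hbound⟩ := core r Af hne hclos hsymp'
    have hcardA : Af.card = 2 ^ m := by
      have h1 : A.ncard = Af.card := Set.ncard_eq_toFinset_card A (Set.toFinite A)
      have h2 : A.ncard = (K : Set (V r)).ncard := by
        rw [hA]
        exact Set.ncard_image_of_injective _ (add_right_injective u)
      haveI : Fintype K := Fintype.ofFinite _
      have h3 : (K : Set (V r)).ncard = Nat.card K := (Nat.card_coe_set_eq _).symm
      have h4 : Nat.card K = 2 ^ m := by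
        rw [Nat.card_eq_fintype_card]
        rw [Module.card_eq_pow_finrank (K := ZMod 2) (V := K), hrank, ZMod.card]
      omega
    have hmr : m ≤ r := by
      rw [hcardA] at hcardR
      push_cast at hcardR
      exact (pow_le_pow_iff_right₀ (by norm_num : (1:ℝ) < 2)).mp hcardR
    have hkey : (1/(4:ℝ)^r) * (3^r * 2^m) = (3/4)^(r-m) * (3/2)^m := by
      have hr : r - m + m = r := Nat.sub_add_cancel hmr
      have h4 : (4:ℝ)^r = 4^(r-m) * 4^m := by rw [← pow_add, hr]
      have h24 : (4:ℝ)^m = 2^m * 2^m := by rw [← mul_pow]; norm_num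
      rw [div_pow, div_pow]
      have h3 : (3:ℝ)^r = 3^(r-m) * 3^m := by rw [← pow_add, hr]
      field_simp
      rw [h4, h24, h3]
      ring
    have h40 : (0:ℝ) < 4 ^ r := by positivity
    calc Fr r A = (1/4^r) * ∑ x ∈ Af, ∑ y ∈ Af, kapr x y := rfl
      _ ≤ (1/4^r) * (3^r * Af.card) := by
          apply mul_le_mul_of_nonneg_left hbound
          positivity
      _ = (1/(4:ℝ)^r) * (3^r * 2^m) := by rw [hcardA]; push_cast; ring
      _ = (3/4 : ℝ)^(r-m) * (3/2)^m := hkey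
  · intro n p hp
    have hset : (Set.toFinite {x : V n | ∀ j, x j = 0 ∨ x j = p j}).toFinset
        = Fintype.piFinset (fun j => ({0, p j} : Finset F2)) := by
      ext x
      simp [Set.Finite.mem_toFinset, Fintype.mem_piFinset]
    have hsite : ∀ j : Fin n, ∑ a ∈ ({0, p j} : Finset F2), ∑ b ∈ ({0, p j} : Finset F2),
        kap a b = 6 := by
      intro j
      have hpj := hp j
      rw [Finset.sum_insert (by simpa using (Ne.symm hpj)), Finset.sum_singleton,
        Finset.sum_insert (by simpa using (Ne.symm hpj)), Finset.sum_singleton,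
        Finset.sum_insert (by simpa using (Ne.symm hpj)), Finset.sum_singleton]
      have k1 : kap 0 0 = 1 := by simp [kap]
      have k2 : kap 0 (p j) = 1 := by simp [kap]
      have k3 : kap (p j) 0 = 1 := by simp [kap]
      have k4 : kap (p j) (p j) = 3 := by simp [kap, hpj]
      rw [k1, k2, k3, k4]
      norm_num
    have hprod : ∑ x ∈ Fintype.piFinset (fun j => ({0, p j} : Finset F2)),
        ∑ y ∈ Fintype.piFinset (fun j => ({0, p j} : Finset F2)), kapr x y = 6 ^ n := by
      have h1 : ∏ j : Fin n, (∑ a ∈ ({0, p j} : Finset F2), ∑ b ∈ ({0, p j} : Finset F2),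
          kap a b)
          = ∑ x ∈ Fintype.piFinset (fun j => ({0, p j} : Finset F2)),
              ∏ j, ∑ b ∈ ({0, p j} : Finset F2), kap (x j) b :=
        Finset.prod_univ_sum _ _
      have h2 : ∀ x : V n, ∏ j, (∑ b ∈ ({0, p j} : Finset F2), kap (x j) b)
          = ∑ y ∈ Fintype.piFinset (fun j => ({0, p j} : Finset F2)), kapr x y :=
        fun x => Finset.prod_univ_sum _ _
      calc ∑ x ∈ Fintype.piFinset (fun j => ({0, p j} : Finset F2)),
            ∑ y ∈ Fintype.piFinset (fun j => ({0, p j} : Finset F2)), kapr x y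
          = ∑ x ∈ Fintype.piFinset (fun j => ({0, p j} : Finset F2)),
              ∏ j, ∑ b ∈ ({0, p j} : Finset F2), kap (x j) b :=
            Finset.sum_congr rfl fun x _ => (h2 x).symm
        _ = ∏ j : Fin n, (∑ a ∈ ({0, p j} : Finset F2), ∑ b ∈ ({0, p j} : Finset F2),
              kap a b) := h1.symm
        _ = ∏ j : Fin n, (6:ℝ) := Finset.prod_congr rfl fun j _ => hsite j
        _ = 6 ^ n := by rw [Finset.prod_const, Finset.card_univ, Fintype.card_fin]
    show (1 / 4 ^ n) * _ = (3/2 : ℝ)^n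
    rw [hset, hprod]
    rw [show (6:ℝ)^n = (3/2)^n * 4^n from by rw [← mul_pow]; norm_num]
    have : (4:ℝ)^n ≠ 0 := by positivity
    field_simp
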